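/- arXiv:0905.0735 — 2 statements merged into one kernel-verified Lean document; each statement's English description precedes it below -/
import Mathlib

section
/- A k-graph Λ is aperiodic (for every pair of distinct α, β ∈ Λ with s(α) = s(β) there exists τ ∈ s(α)Λ with MCE(ατ, βτ) = ∅) if and only if for every pair of distinct μ, ν ∈ Λ with s(μ) = s(ν), r(μ) = r(ν), and d(μ) ∧ d(ν) = 0, there exists τ ∈ s(μ)Λ with MCE(μτ, ντ) = ∅. -/
/-- A `k`-graph: a countable category `Λ` with a degree functor `d : Λ → ℕ^k`
satisfying the factorisation property. Morphisms form the type `Mor`,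
objects (vertices) the type `Obj`. -/
structure KGraph (k : ℕ) where
  Obj : Type
  Mor : Type
  countableObj : Countable Obj
  countableMor : Countable Mor
  r : Mor → Obj
  s : Mor → Obj
  d : Mor → (Fin k → ℕ)
  id : Obj → Mor
  comp : ∀ μ ν : Mor, s μ = r ν → Mor
  r_id : ∀ v, r (id v) = v
  s_id : ∀ v, s (id v) = v
  d_id : ∀ v, d (id v) = 0
  r_comp : ∀ μ ν h, r (comp μ ν h) = r μ
  s_comp : ∀ μ ν h, s (comp μ ν h) = s ν
  d_comp : ∀ μ ν h, d (comp μ ν h) = d μ + d ν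
  id_comp : ∀ μ : Mor, comp (id (r μ)) μ (s_id (r μ)) = μ
  comp_id : ∀ μ : Mor, comp μ (id (s μ)) ((r_id (s μ)).symm) = μ
  assoc : ∀ (μ ν ρ : Mor) (h₁ : s μ = r ν) (h₂ : s ν = r ρ),
    comp (comp μ ν h₁) ρ ((s_comp μ ν h₁).trans h₂)
      = comp μ (comp ν ρ h₂) (h₁.trans (r_comp ν ρ h₂).symm)
  factor : ∀ (lam : Mor) (m n : Fin k → ℕ), d lam = m + n →
    ∃! p : {q : Mor × Mor // s q.1 = r q.2},
      d p.val.1 = m ∧ d p.val.2 = n ∧ lam = comp p.val.1 p.val.2 p.property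

namespace KGraph

variable {k : ℕ} (Λ : KGraph k)

/-- `μ` is an initial segment of `lam`, i.e. `lam = μρ` for some `ρ`. -/
def InitSeg (μ lam : Λ.Mor) : Prop :=
  ∃ (ρ : Λ.Mor) (h : Λ.s μ = Λ.r ρ), lam = Λ.comp μ ρ h

/-- The set of minimal common extensions of `μ` and `ν`. -/
def MCE (μ ν : Λ.Mor) : Set Λ.Mor :=
  {lam | Λ.d lam = Λ.d μ ⊔ Λ.d ν ∧ Λ.InitSeg μ lam ∧ Λ.InitSeg ν lam}

/-- `Λ` is finitely aligned if all `MCE` sets are finite. -/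
def FinitelyAligned : Prop := ∀ μ ν : Λ.Mor, (Λ.MCE μ ν).Finite

/-- Aperiodicity: distinct paths with the same source admit a common
extension `τ` with `MCE (ατ, βτ) = ∅`. -/
def Aperiodic : Prop :=
  ∀ α β : Λ.Mor, α ≠ β → Λ.s α = Λ.s β →
    ∃ (τ : Λ.Mor) (hα : Λ.s α = Λ.r τ) (hβ : Λ.s β = Λ.r τ),
      Λ.MCE (Λ.comp α τ hα) (Λ.comp β τ hβ) = ∅

/-- `E` is a finite exhaustive subset of `vΛ`. -/
def IsFE (v : Λ.Obj) (E : Set Λ.Mor) : Prop :=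
  E.Finite ∧ (∀ α ∈ E, Λ.r α = v) ∧
    ∀ μ : Λ.Mor, Λ.r μ = v → ∃ lam ∈ E, (Λ.MCE μ lam).Nonempty

/-- The segment `lam(p,q)` of a path `lam`, for `p ≤ q ≤ d lam`,
obtained from the factorisation property. -/
noncomputable def seg (lam : Λ.Mor) (p q : Fin k → ℕ) (hpq : p ≤ q) (hq : q ≤ Λ.d lam) :
    Λ.Mor := by
  have h1 : Λ.d lam = p + (Λ.d lam - p) := by
    funext i; exact (Nat.add_sub_cancel' ((hpq.trans hq) i)).symm
  have hspec := (Λ.factor lam p (Λ.d lam - p) h1).exists.choose_spec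
  refine (Λ.factor ((Λ.factor lam p (Λ.d lam - p) h1).exists.choose).val.2
      (q - p) (Λ.d lam - q) ?_).exists.choose.val.1
  rw [hspec.2.1]
  funext i
  have h3 : p i ≤ q i := hpq i
  have h4 : q i ≤ Λ.d lam i := hq i
  simp only [Pi.sub_apply, Pi.add_apply]
  omega

/-- A (possibly infinite) path in `Λ`: a degree-preserving functor from
`Ω_{k,m}` (for `m = deg ∈ (ℕ ∪ {∞})^k`) to `Λ`, recorded by its segments. -/
structure InfPath (Λ : KGraph k) where
  deg : Fin k → ℕ∞
  seg : ∀ p q : Fin k → ℕ, p ≤ q → (∀ i, (q i : ℕ∞) ≤ deg i) → Λ.Mor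
  d_seg : ∀ p q hpq hq, Λ.d (seg p q hpq hq) = q - p
  comp_seg : ∀ (p q r : Fin k → ℕ) (hpq : p ≤ q) (hqr : q ≤ r)
      (hq : ∀ i, (q i : ℕ∞) ≤ deg i) (hr : ∀ i, (r i : ℕ∞) ≤ deg i),
    ∃ h : Λ.s (seg p q hpq hq) = Λ.r (seg q r hqr hr),
      Λ.comp (seg p q hpq hq) (seg q r hqr hr) h = seg p r (hpq.trans hqr) hr

/-- The vertex `x(n)` of an infinite path. -/
def InfPath.vert {Λ : KGraph k} (x : Λ.InfPath) (n : Fin k → ℕ) (hn : ∀ i, (n i : ℕ∞) ≤ x.deg i) : Λ.Obj :=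
  Λ.r (x.seg n n le_rfl hn)

/-- The range `r(x) = x(0)` of an infinite path. -/
def InfPath.rng {Λ : KGraph k} (x : Λ.InfPath) : Λ.Obj :=
  Λ.r (x.seg 0 0 le_rfl (fun i => by simp))

/-- `x` is a boundary path: it hits every finite exhaustive set. -/
def IsBoundary (x : Λ.InfPath) : Prop :=
  ∀ (n : Fin k → ℕ) (hn : ∀ i, (n i : ℕ∞) ≤ x.deg i) (E : Set Λ.Mor),
    Λ.IsFE (x.vert n hn) E →
    ∃ (p : Fin k → ℕ) (hp : ∀ i, ((n + p) i : ℕ∞) ≤ x.deg i),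
      x.seg n (n + p) le_self_add hp ∈ E

/-- The set of boundary paths with range `v` is `v∂Λ`. -/

private lemma enat_aux {a b : ℕ} {D : ℕ∞} (h2 : (a : ℕ∞) ≤ D) (h1 : (b : ℕ∞) ≤ D - a) :
    ((a + b : ℕ) : ℕ∞) ≤ D := by
  cases D with
  | top => exact le_top
  | coe dN =>
    have ha : a ≤ dN := by exact_mod_cast h2
    rw [← ENat.coe_sub] at h1
    have hb : b ≤ dN - a := by exact_mod_cast h1
    exact_mod_cast (by omega : a + b ≤ dN)

/-- The shifted path `σ^m(x)`. -/
def InfPath.shift {Λ : KGraph k} (x : Λ.InfPath) (m : Fin k → ℕ) (hm : ∀ i, (m i : ℕ∞) ≤ x.deg i) :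
    Λ.InfPath where
  deg := fun i => x.deg i - (m i : ℕ∞)
  seg := fun p q hpq hq => x.seg (m + p) (m + q) (add_le_add_right hpq m)
    (fun i => by
      have := enat_aux (hm i) (hq i)
      simpa using this)
  d_seg := fun p q hpq hq => by
    rw [x.d_seg]
    funext i
    simp only [Pi.sub_apply, Pi.add_apply]
    omega
  comp_seg := fun p q r hpq hqr hq hr =>
    x.comp_seg (m + p) (m + q) (m + r) (add_le_add_right hpq m) (add_le_add_right hqr m) _ _

/-- `w = lam · z` : the path `w` extends `z` by the finite path `lam`,
i.e. `w(0, d lam) = lam` and `σ^{d lam}(w) = z`. -/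
def InfPath.ExtendsBy {Λ : KGraph k} (w z : Λ.InfPath) (lam : Λ.Mor) : Prop :=
  ∃ h : ∀ i, ((Λ.d lam) i : ℕ∞) ≤ w.deg i,
    w.seg 0 (Λ.d lam) zero_le h = lam ∧ w.shift (Λ.d lam) h = z

/-- Local periodicity `m, n` at `v`. -/
def LocalPeriodicity (m n : Fin k → ℕ) (v : Λ.Obj) : Prop :=
  ∀ x : Λ.InfPath, Λ.IsBoundary x → x.rng = v →
    (∀ i, (((m ⊔ n) i : ℕ) : ℕ∞) ≤ x.deg i) ∧
    ∃ (hm : ∀ i, (m i : ℕ∞) ≤ x.deg i) (hn : ∀ i, (n i : ℕ∞) ≤ x.deg i),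
      x.shift m hm = x.shift n hn

/-- Cofinality of `Λ`, stated in terms of finite paths. -/
def Cofinal : Prop :=
  ∀ v w : Λ.Obj, ∃ E : Set Λ.Mor, Λ.IsFE w E ∧
    ∀ α ∈ E, ∃ lam : Λ.Mor, Λ.r lam = v ∧ Λ.s lam = Λ.s α


/-- Cancellation: two factorisations of the same morphism with equal first-factor
degrees coincide. -/
lemma comp_cancel {a b ra rb : Λ.Mor} (h1 : Λ.s a = Λ.r ra) (h2 : Λ.s b = Λ.r rb)
    (hda : Λ.d a = Λ.d b) (heq : Λ.comp a ra h1 = Λ.comp b rb h2) : a = b ∧ ra = rb := by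
  have hd : Λ.d (Λ.comp a ra h1) = Λ.d a + Λ.d ra := Λ.d_comp a ra h1
  obtain ⟨p, hp, hu⟩ := Λ.factor (Λ.comp a ra h1) (Λ.d a) (Λ.d ra) hd
  have hdrb : Λ.d rb = Λ.d ra := by
    have h3 : Λ.d (Λ.comp a ra h1) = Λ.d b + Λ.d rb := by rw [heq, Λ.d_comp]
    rw [hd, hda] at h3
    exact (add_left_cancel h3).symm
  have e1 := hu ⟨(a, ra), h1⟩ ⟨rfl, rfl, rfl⟩
  have e2 := hu ⟨(b, rb), h2⟩ ⟨hda.symm, hdrb, heq⟩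
  have : ((a, ra) : Λ.Mor × Λ.Mor) = (b, rb) := by
    have := e1.trans e2.symm
    exact congrArg Subtype.val this
  exact ⟨congrArg Prod.fst this, congrArg Prod.snd this⟩

/-- Congruence for `comp` transporting the composability proof. -/
lemma comp_congr {a a' b b' : Λ.Mor} (ha : a = a') (hb : b = b') (h : Λ.s a = Λ.r b) :
    Λ.comp a b h = Λ.comp a' b' (by rw [← ha, ← hb]; exact h) := by subst ha hb; rfl

lemma comp_id' (μ e : Λ.Mor) (he : e = Λ.id (Λ.s μ)) (h : Λ.s μ = Λ.r e) :
    Λ.comp μ e h = μ := by subst he; exact Λ.comp_id μ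

/-- If the ranges differ, there is no common extension. -/
lemma MCE_empty_of_r_ne {α β : Λ.Mor} (hr : Λ.r α ≠ Λ.r β) : Λ.MCE α β = ∅ := by
  rw [Set.eq_empty_iff_forall_notMem]
  rintro lam ⟨-, ⟨ρ1, hh1, e1⟩, ⟨ρ2, hh2, e2⟩⟩
  apply hr
  have r1 : Λ.r lam = Λ.r α := by rw [e1, Λ.r_comp]
  have r2 : Λ.r lam = Λ.r β := by rw [e2, Λ.r_comp]
  exact r1.symm.trans r2

/-- `Λ` is aperiodic iff for every distinct pair `μ, ν` with the same
source and range and `d(μ) ∧ d(ν) = 0` there exists `τ ∈ s(μ)Λ` with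
`MCE(μτ, ντ) = ∅`. -/
theorem aperiodic_iff_reduced :
    Λ.Aperiodic ↔
      ∀ μ ν : Λ.Mor, μ ≠ ν → Λ.s μ = Λ.s ν → Λ.r μ = Λ.r ν → Λ.d μ ⊓ Λ.d ν = 0 →
        ∃ (τ : Λ.Mor) (hμ : Λ.s μ = Λ.r τ) (hν : Λ.s ν = Λ.r τ),
          Λ.MCE (Λ.comp μ τ hμ) (Λ.comp ν τ hν) = ∅ := by
  constructor
  · intro h μ ν h1 h2 _ _
    exact h μ ν h1 h2
  · intro h α β hne hs
    -- the identity at `s α` works whenever `MCE α β = ∅`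
    have trivialτ : Λ.MCE α β = ∅ →
        ∃ (τ : Λ.Mor) (hα : Λ.s α = Λ.r τ) (hβ : Λ.s β = Λ.r τ),
          Λ.MCE (Λ.comp α τ hα) (Λ.comp β τ hβ) = ∅ := by
      intro hem
      refine ⟨Λ.id (Λ.s α), (Λ.r_id _).symm, hs.symm.trans (Λ.r_id _).symm, ?_⟩
      rw [Λ.comp_id' α (Λ.id (Λ.s α)) rfl, Λ.comp_id' β (Λ.id (Λ.s α)) (congrArg Λ.id hs)]
      exact hem
    by_cases hr : Λ.r α = Λ.r β
    · -- factor off the common-degree initial segments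
      set m : Fin k → ℕ := Λ.d α ⊓ Λ.d β with hm
      have hmα : Λ.d α = m + (Λ.d α - m) := by
        funext i
        have hle : m i ≤ Λ.d α i := by
          rw [hm]; simp only [Pi.inf_apply]; exact inf_le_left
        simp only [Pi.add_apply, Pi.sub_apply]
        omega
      have hmβ : Λ.d β = m + (Λ.d β - m) := by
        funext i
        have hle : m i ≤ Λ.d β i := by
          rw [hm]; simp only [Pi.inf_apply]; exact inf_le_right
        simp only [Pi.add_apply, Pi.sub_apply]
        omega
      obtain ⟨⟨⟨κa, μ⟩, hκμ⟩, hdκa, hdμ, hαfac⟩ := (Λ.factor α m (Λ.d α - m) hmα).exists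
      obtain ⟨⟨⟨κb, ν⟩, hκν⟩, hdκb, hdν, hβfac⟩ := (Λ.factor β m (Λ.d β - m) hmβ).exists
      simp only at hκμ hκν hdκa hdκb hdμ hdν hαfac hβfac
      by_cases hκ : κa = κb
      · subst hκ
        -- the tails μ, ν satisfy the reduced hypothesis
        have hμν : μ ≠ ν := by
          intro hh; subst hh
          exact hne (hαfac.trans hβfac.symm)
        have hsμν : Λ.s μ = Λ.s ν := by
          have a1 : Λ.s α = Λ.s μ := by rw [hαfac, Λ.s_comp]
          have a2 : Λ.s β = Λ.s ν := by rw [hβfac, Λ.s_comp]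
          rw [← a1, ← a2]; exact hs
        have hrμν : Λ.r μ = Λ.r ν := hκμ.symm.trans hκν
        have hdinf : Λ.d μ ⊓ Λ.d ν = 0 := by
          funext i
          have h1 := congrFun hdμ i
          have h2 := congrFun hdν i
          have hmi := congrFun hm i
          simp only [Pi.sub_apply, Pi.inf_apply, Pi.zero_apply] at h1 h2 hmi ⊢
          omega
        obtain ⟨τ, hμτ, hντ, hMCE⟩ := h μ ν hμν hsμν hrμν hdinf
        have hατ : Λ.s α = Λ.r τ := by rw [hαfac, Λ.s_comp]; exact hμτ
        have hβτ : Λ.s β = Λ.r τ := by rw [hβfac, Λ.s_comp]; exact hντ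
        refine ⟨τ, hατ, hβτ, ?_⟩
        rw [Set.eq_empty_iff_forall_notMem]
        rintro lam ⟨hdlam, ⟨ρ1, hh1, e1⟩, ⟨ρ2, hh2, e2⟩⟩
        -- rewrite lam = κa · (μτ · ρ1) = κa · (ντ · ρ2)
        have hsτρ1 : Λ.s (Λ.comp μ τ hμτ) = Λ.r ρ1 := by
          rw [Λ.s_comp]
          have hx : Λ.s (Λ.comp α τ hατ) = Λ.s τ := Λ.s_comp _ _ _
          rw [← hx]; exact hh1
        have hsτρ2 : Λ.s (Λ.comp ν τ hντ) = Λ.r ρ2 := by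
          rw [Λ.s_comp]
          have hx : Λ.s (Λ.comp β τ hβτ) = Λ.s τ := Λ.s_comp _ _ _
          rw [← hx]; exact hh2
        set lam1 : Λ.Mor := Λ.comp (Λ.comp μ τ hμτ) ρ1 hsτρ1 with hlam1
        set lam2 : Λ.Mor := Λ.comp (Λ.comp ν τ hντ) ρ2 hsτρ2 with hlam2
        have hsκ1 : Λ.s κa = Λ.r lam1 := by
          rw [hlam1, Λ.r_comp, Λ.r_comp]; exact hκμ
        have hsκ2 : Λ.s κa = Λ.r lam2 := by
          rw [hlam2, Λ.r_comp, Λ.r_comp]; exact hκν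
        have step1 : Λ.comp α τ hατ
            = Λ.comp κa (Λ.comp μ τ hμτ) (by rw [Λ.r_comp]; exact hκμ) :=
          (Λ.comp_congr hαfac rfl hατ).trans (Λ.assoc κa μ τ hκμ hμτ)
        have step2 : Λ.comp β τ hβτ
            = Λ.comp κa (Λ.comp ν τ hντ) (by rw [Λ.r_comp]; exact hκν) :=
          (Λ.comp_congr hβfac rfl hβτ).trans (Λ.assoc κa ν τ hκν hντ)
        have e1' : lam = Λ.comp κa lam1 hsκ1 := by
          rw [e1]
          exact (Λ.comp_congr step1 rfl hh1).trans
            (Λ.assoc κa (Λ.comp μ τ hμτ) ρ1 (by rw [Λ.r_comp]; exact hκμ) hsτρ1)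
        have e2' : lam = Λ.comp κa lam2 hsκ2 := by
          rw [e2]
          exact (Λ.comp_congr step2 rfl hh2).trans
            (Λ.assoc κa (Λ.comp ν τ hντ) ρ2 (by rw [Λ.r_comp]; exact hκν) hsτρ2)
        obtain ⟨-, hl12⟩ := Λ.comp_cancel hsκ1 hsκ2 rfl (e1'.symm.trans e2')
        -- lam1 ∈ MCE (μτ) (ντ) = ∅
        rw [Set.eq_empty_iff_forall_notMem] at hMCE
        apply hMCE lam1
        refine ⟨?_, ⟨ρ1, hsτρ1, hlam1⟩, ⟨ρ2, hsτρ2, hl12.trans hlam2⟩⟩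
        have hdl : Λ.d lam = Λ.d κa + Λ.d lam1 := by rw [e1', Λ.d_comp]
        have hdlam1 : Λ.d lam1 = Λ.d (Λ.comp μ τ hμτ) + Λ.d ρ1 := by
          rw [hlam1, Λ.d_comp]
        funext i
        have c0 := congrFun hdlam i
        have c1 := congrFun hdl i
        have c2 := congrFun hdlam1 i
        have cκ := congrFun hdκa i
        have cμ := congrFun hdμ i
        have cν := congrFun hdν i
        have cμτ := congrFun (Λ.d_comp μ τ hμτ) i
        have cντ := congrFun (Λ.d_comp ν τ hντ) i
        have cατ := congrFun (Λ.d_comp α τ hατ) i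
        have cβτ := congrFun (Λ.d_comp β τ hβτ) i
        have cα := congrFun hmα i
        have cβ := congrFun hmβ i
        have cm := congrFun hm i
        simp only [Pi.sup_apply, Pi.add_apply, Pi.sub_apply, Pi.inf_apply, 
         ] at c0 c1 c2 cμ cν cμτ cντ cατ cβτ cα cβ cm ⊢
        omega
      · -- κa ≠ κb: no common extension of α and β at all
        apply trivialτ
        rw [Set.eq_empty_iff_forall_notMem]
        rintro lam ⟨-, ⟨ρ1, hh1, e1⟩, ⟨ρ2, hh2, e2⟩⟩
        apply hκ
        have hs1 : Λ.s μ = Λ.r ρ1 := by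
          have hx : Λ.s α = Λ.s μ := by rw [hαfac, Λ.s_comp]
          rw [← hx]; exact hh1
        have hs2 : Λ.s ν = Λ.r ρ2 := by
          have hx : Λ.s β = Λ.s ν := by rw [hβfac, Λ.s_comp]
          rw [← hx]; exact hh2
        have hsκ1 : Λ.s κa = Λ.r (Λ.comp μ ρ1 hs1) := by rw [Λ.r_comp]; exact hκμ
        have hsκ2 : Λ.s κb = Λ.r (Λ.comp ν ρ2 hs2) := by rw [Λ.r_comp]; exact hκν
        have e1' : lam = Λ.comp κa (Λ.comp μ ρ1 hs1) hsκ1 := by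
          rw [e1]
          exact (Λ.comp_congr hαfac rfl hh1).trans (Λ.assoc κa μ ρ1 hκμ hs1)
        have e2' : lam = Λ.comp κb (Λ.comp ν ρ2 hs2) hsκ2 := by
          rw [e2]
          exact (Λ.comp_congr hβfac rfl hh2).trans (Λ.assoc κb ν ρ2 hκν hs2)
        exact (Λ.comp_cancel hsκ1 hsκ2 (hdκa.trans hdκb.symm) (e1'.symm.trans e2')).1
    · exact trivialτ (Λ.MCE_empty_of_r_ne hr)

end KGraph
end

section
/- Let Λ be a finitely aligned k-graph with local periodicity m, n at v. Then there exist μ, ν, α ∈ Λ with r(μ) = r(ν) = v, s(μ) = s(ν) = r(α), d(μ) = m, d(ν) = n, and μαz = ναz for every boundary path z with r(z) = s(α). -/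
namespace KGraph

variable {k : ℕ} (Λ : KGraph k)

/-! ### Auxiliary lemmas: calculus of finite path segments -/

lemma comp_congr_s14 {μ ν μ' ν' : Λ.Mor} (hμ : μ = μ') (hν : ν = ν')
    (h : Λ.s μ = Λ.r ν) (h' : Λ.s μ' = Λ.r ν') :
    Λ.comp μ ν h = Λ.comp μ' ν' h' := by subst hμ; subst hν; rfl

lemma eq_id_of_d_eq_zero {g : Λ.Mor} (hg : Λ.d g = 0) : g = Λ.id (Λ.r g) := by
  have h0 : Λ.d g = 0 + 0 := by simpa using hg
  have hf := Λ.factor g 0 0 h0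
  have e1 : (⟨(Λ.id (Λ.r g), g), by rw [Λ.s_id]⟩ :
      {q : Λ.Mor × Λ.Mor // Λ.s q.1 = Λ.r q.2}) =
      ⟨(g, Λ.id (Λ.s g)), (Λ.r_id (Λ.s g)).symm⟩ := by
    have := hf.unique (y₁ := ⟨(Λ.id (Λ.r g), g), by rw [Λ.s_id]⟩)
      (y₂ := ⟨(g, Λ.id (Λ.s g)), (Λ.r_id (Λ.s g)).symm⟩)
      ⟨Λ.d_id _, hg, (Λ.id_comp g).symm⟩ ⟨hg, Λ.d_id _, (Λ.comp_id g).symm⟩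
    exact this
  have := congrArg (fun p => p.1.1) e1
  exact this.symm

lemma s_eq_r_of_d_eq_zero {g : Λ.Mor} (hg : Λ.d g = 0) : Λ.s g = Λ.r g := by
  conv_lhs => rw [eq_id_of_d_eq_zero Λ hg]
  rw [Λ.s_id]

lemma factor_eq {lam a b a' b' : Λ.Mor} (h : Λ.s a = Λ.r b) (h' : Λ.s a' = Λ.r b')
    (e : Λ.comp a b h = lam) (e' : Λ.comp a' b' h' = lam) (hd : Λ.d a = Λ.d a') :
    a = a' ∧ b = b' := by
  have hsum : Λ.d lam = Λ.d a + Λ.d b := by rw [← e, Λ.d_comp]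
  have hsum' : Λ.d lam = Λ.d a' + Λ.d b' := by rw [← e', Λ.d_comp]
  have hdb : Λ.d b = Λ.d b' := by
    funext i
    have := congrFun hsum i; have := congrFun hsum' i; have := congrFun hd i
    simp only [Pi.add_apply] at *; omega
  have hf := Λ.factor lam (Λ.d a) (Λ.d b) hsum
  have e2 : (⟨(a, b), h⟩ : {q : Λ.Mor × Λ.Mor // Λ.s q.1 = Λ.r q.2}) = ⟨(a', b'), h'⟩ :=
    hf.unique ⟨rfl, rfl, e.symm⟩ ⟨hd.symm, hdb.symm, e'.symm⟩
  have h1 := congrArg (fun p => p.1.1) e2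
  have h2 := congrArg (fun p => p.1.2) e2
  exact ⟨h1, h2⟩

/-- `b` is the segment `lam(p, q)`. -/
def IsSeg (lam : Λ.Mor) (p q : Fin k → ℕ) (b : Λ.Mor) : Prop :=
  Λ.d b = q - p ∧ ∃ (a c : Λ.Mor) (h1 : Λ.s b = Λ.r c) (h2 : Λ.s a = Λ.r (Λ.comp b c h1)),
    Λ.d a = p ∧ lam = Λ.comp a (Λ.comp b c h1) h2

lemma IsSeg.unique {lam : Λ.Mor} {p q : Fin k → ℕ} {b b' : Λ.Mor}
    (hb : Λ.IsSeg lam p q b) (hb' : Λ.IsSeg lam p q b') : b = b' := by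
  obtain ⟨hd, a, c, h1, h2, ha, e⟩ := hb
  obtain ⟨hd', a', c', h1', h2', ha', e'⟩ := hb'
  obtain ⟨haa, hbc⟩ := Λ.factor_eq h2 h2' e.symm e'.symm (ha.trans ha'.symm)
  exact (Λ.factor_eq h1 h1' hbc rfl (hd.trans hd'.symm)).1

lemma isSeg_exists (lam : Λ.Mor) (p q : Fin k → ℕ) (hpq : p ≤ q) (hq : q ≤ Λ.d lam) :
    ∃ b, Λ.IsSeg lam p q b := by
  have h1 : Λ.d lam = p + (Λ.d lam - p) := by
    funext i; exact (Nat.add_sub_cancel' ((hpq.trans hq) i)).symm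
  obtain ⟨⟨⟨a, t⟩, hat⟩, ⟨hda, hdt, he⟩, -⟩ := Λ.factor lam p (Λ.d lam - p) h1
  have h2 : Λ.d t = (q - p) + (Λ.d lam - q) := by
    rw [hdt]; funext i
    have h3 : p i ≤ q i := hpq i
    have h4 : q i ≤ Λ.d lam i := hq i
    simp only [Pi.sub_apply, Pi.add_apply]; omega
  obtain ⟨⟨⟨b, c⟩, hbc⟩, ⟨hdb, hdc, he2⟩, -⟩ := Λ.factor t (q - p) (Λ.d lam - q) h2
  refine ⟨b, hdb, a, c, hbc, ?_, hda, ?_⟩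
  · rw [← he2]; exact hat
  · rw [he]; exact Λ.comp_congr_s14 rfl he2 _ _

/-- The segment `lam(p,q)` (our own version, with a clean API). -/
noncomputable def sg (lam : Λ.Mor) (p q : Fin k → ℕ) (hpq : p ≤ q) (hq : q ≤ Λ.d lam) :
    Λ.Mor := (Λ.isSeg_exists lam p q hpq hq).choose

lemma isSeg_sg (lam : Λ.Mor) (p q : Fin k → ℕ) (hpq : p ≤ q) (hq : q ≤ Λ.d lam) :
    Λ.IsSeg lam p q (Λ.sg lam p q hpq hq) := (Λ.isSeg_exists lam p q hpq hq).choose_spec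

lemma IsSeg.sg_eq {lam : Λ.Mor} {p q : Fin k → ℕ} {b : Λ.Mor} (hb : Λ.IsSeg lam p q b)
    (hpq : p ≤ q) (hq : q ≤ Λ.d lam) : Λ.sg lam p q hpq hq = b :=
  (Λ.isSeg_sg lam p q hpq hq).unique Λ hb

lemma d_sg (lam : Λ.Mor) (p q : Fin k → ℕ) (hpq : p ≤ q) (hq : q ≤ Λ.d lam) :
    Λ.d (Λ.sg lam p q hpq hq) = q - p := (Λ.isSeg_sg lam p q hpq hq).1

lemma sg_congr {lam : Λ.Mor} {p q p' q' : Fin k → ℕ} (hp : p = p') (hq : q = q')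
    (h1 : p ≤ q) (h2 : q ≤ Λ.d lam) (h1' : p' ≤ q') (h2' : q' ≤ Λ.d lam) :
    Λ.sg lam p q h1 h2 = Λ.sg lam p' q' h1' h2' := by subst hp; subst hq; rfl

lemma assoc' {μ ν ρ : Λ.Mor} (h₁ : Λ.s μ = Λ.r ν) (h₂ : Λ.s ν = Λ.r ρ)
    (h₃ : Λ.s (Λ.comp μ ν h₁) = Λ.r ρ) (h₄ : Λ.s μ = Λ.r (Λ.comp ν ρ h₂)) :
    Λ.comp (Λ.comp μ ν h₁) ρ h₃ = Λ.comp μ (Λ.comp ν ρ h₂) h₄ := Λ.assoc μ ν ρ h₁ h₂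

/-- From a two-fold factorisation, the first factor is an initial segment. -/
lemma isSeg_of_comp {lam b c : Λ.Mor} (h : Λ.s b = Λ.r c) (e : lam = Λ.comp b c h)
    {q : Fin k → ℕ} (hdb : Λ.d b = q) : Λ.IsSeg lam 0 q b := by
  refine ⟨by simpa using hdb, Λ.id (Λ.r (Λ.comp b c h)), c, h, by rw [Λ.s_id], Λ.d_id _, ?_⟩
  conv_lhs => rw [e]
  exact (Λ.id_comp (Λ.comp b c h)).symm

/-- From a two-fold factorisation, the second factor is a terminal segment. -/
lemma isSeg_of_comp' {lam a b : Λ.Mor} (h : Λ.s a = Λ.r b) (e : lam = Λ.comp a b h)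
    {p : Fin k → ℕ} (hda : Λ.d a = p) : Λ.IsSeg lam p (Λ.d lam) b := by
  have hd : Λ.d b = Λ.d lam - p := by
    have h9 := Λ.d_comp a b h; rw [← e, hda] at h9
    funext i; have h10 := congrFun h9 i
    simp only [Pi.add_apply] at h10
    simp only [Pi.sub_apply]; omega
  refine ⟨hd, a, Λ.id (Λ.s b), (Λ.r_id _).symm, ?_, hda, ?_⟩
  · rw [Λ.comp_id]; exact h
  · rw [e]; exact Λ.comp_congr_s14 rfl (Λ.comp_id b).symm _ _

lemma isSeg_whole (lam : Λ.Mor) : Λ.IsSeg lam 0 (Λ.d lam) lam :=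
  Λ.isSeg_of_comp (c := Λ.id (Λ.s lam)) (Λ.r_id _).symm (Λ.comp_id lam).symm rfl

/-- Splitting a segment: `lam(p,q) ⬝ lam(q,r') = lam(p,r')`. -/
lemma sg_comp (lam : Λ.Mor) (p q r' : Fin k → ℕ) (hpq : p ≤ q) (hqr : q ≤ r')
    (hr : r' ≤ Λ.d lam) :
    ∃ h : Λ.s (Λ.sg lam p q hpq (hqr.trans hr)) = Λ.r (Λ.sg lam q r' hqr hr),
      Λ.comp _ _ h = Λ.sg lam p r' (hpq.trans hqr) hr := by
  obtain ⟨hd1, a, c, h1, h2, ha, e⟩ := Λ.isSeg_sg lam p q hpq (hqr.trans hr)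
  set B1 := Λ.sg lam p q hpq (hqr.trans hr) with hB1
  have hdc : Λ.d c = (r' - q) + (Λ.d lam - r') := by
    have e1 := Λ.d_comp a (Λ.comp B1 c h1) h2
    have e2 := Λ.d_comp B1 c h1
    rw [← e] at e1
    funext i
    have i1 := congrFun e1 i; have i2 := congrFun e2 i
    have i3 := congrFun ha i; have i4 := congrFun hd1 i
    have i5 : p i ≤ q i := hpq i
    have i6 : q i ≤ r' i := hqr i
    have i7 : r' i ≤ Λ.d lam i := hr i
    simp only [Pi.add_apply, Pi.sub_apply] at *
    omega
  obtain ⟨⟨⟨B2, c2⟩, h3⟩, hfac, -⟩ := Λ.factor c (r' - q) (Λ.d lam - r') hdc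
  obtain ⟨hdB2, hdc2, he2⟩ := hfac
  dsimp only at hdB2 hdc2 he2 h3
  have h4 : Λ.s B1 = Λ.r (Λ.comp B2 c2 h3) := by
    rw [Λ.r_comp]; rw [he2, Λ.r_comp] at h1; exact h1
  have h2' : Λ.s a = Λ.r B1 := by rw [Λ.r_comp] at h2; exact h2
  have e3 : lam = Λ.comp a (Λ.comp B1 (Λ.comp B2 c2 h3) h4)
      (h2'.trans (Λ.r_comp B1 _ h4).symm) := by
    rw [e]; exact Λ.comp_congr_s14 rfl (Λ.comp_congr_s14 rfl he2 _ _) _ _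
  have e4 : lam = Λ.comp (Λ.comp a B1 h2') (Λ.comp B2 c2 h3)
      ((Λ.s_comp a B1 h2').trans h4) :=
    e3.trans (Λ.assoc' h2' h4 _ (h2'.trans (Λ.r_comp B1 _ h4).symm)).symm
  have hdA : Λ.d (Λ.comp a B1 h2') = q := by
    rw [Λ.d_comp, ha, hd1]
    funext i
    have i5 : p i ≤ q i := hpq i
    simp only [Pi.add_apply, Pi.sub_apply]; omega
  have hseg2 : Λ.IsSeg lam q r' B2 :=
    ⟨hdB2, Λ.comp a B1 h2', c2, h3, (Λ.s_comp a B1 h2').trans h4, hdA, e4⟩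
  have h6 : Λ.s B1 = Λ.r B2 := h4.trans (Λ.r_comp B2 c2 h3)
  have h7 : Λ.s (Λ.comp B1 B2 h6) = Λ.r c2 := (Λ.s_comp B1 B2 h6).trans h3
  have h8 : Λ.s a = Λ.r (Λ.comp (Λ.comp B1 B2 h6) c2 h7) := by
    rw [Λ.r_comp, Λ.r_comp]; exact h2'
  have e5 : lam = Λ.comp a (Λ.comp (Λ.comp B1 B2 h6) c2 h7) h8 :=
    e3.trans (Λ.comp_congr_s14 rfl (Λ.assoc' h6 h3 h7 h4).symm _ _)
  have hdBB : Λ.d (Λ.comp B1 B2 h6) = r' - p := by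
    rw [Λ.d_comp, hd1, hdB2]
    funext i
    have i5 : p i ≤ q i := hpq i
    have i6 : q i ≤ r' i := hqr i
    simp only [Pi.add_apply, Pi.sub_apply]; omega
  have hseg3 : Λ.IsSeg lam p r' (Λ.comp B1 B2 h6) := ⟨hdBB, a, c2, h7, h8, ha, e5⟩
  rw [hseg2.sg_eq Λ hqr hr]
  exact ⟨h6, (hseg3.sg_eq Λ (hpq.trans hqr) hr).symm⟩

lemma sg_whole (lam : Λ.Mor) (h1 : 0 ≤ Λ.d lam) (h2 : Λ.d lam ≤ Λ.d lam) :
    Λ.sg lam 0 (Λ.d lam) h1 h2 = lam := (Λ.isSeg_whole lam).sg_eq Λ h1 h2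

lemma sg_eq_of_eq {lam lam' : Λ.Mor} (h : lam = lam') {p q : Fin k → ℕ}
    (h1 : p ≤ q) (h2 : q ≤ Λ.d lam) (h2' : q ≤ Λ.d lam') :
    Λ.sg lam p q h1 h2 = Λ.sg lam' p q h1 h2' := by subst h; rfl

/-- Segments are stable under extending the path on the right. -/
lemma IsSeg.extend {lam b : Λ.Mor} {p q : Fin k → ℕ} (hb : Λ.IsSeg lam p q b)
    (ρ : Λ.Mor) (h : Λ.s lam = Λ.r ρ) : Λ.IsSeg (Λ.comp lam ρ h) p q b := by
  obtain ⟨hd, a, c, h1, h2, ha, e⟩ := hb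
  have h10 : Λ.s c = Λ.r ρ := by
    rw [e, Λ.s_comp, Λ.s_comp] at h; exact h
  have h9 : Λ.s (Λ.comp b c h1) = Λ.r ρ := (Λ.s_comp b c h1).trans h10
  have h11 : Λ.s b = Λ.r (Λ.comp c ρ h10) := h1.trans (Λ.r_comp c ρ h10).symm
  have h12 : Λ.s a = Λ.r (Λ.comp (Λ.comp b c h1) ρ h9) := h2.trans (Λ.r_comp _ ρ h9).symm
  have e0 : Λ.comp lam ρ h
      = Λ.comp (Λ.comp a (Λ.comp b c h1) h2) ρ ((Λ.s_comp a _ h2).trans h9) :=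
    Λ.comp_congr_s14 e rfl _ _
  have e1 : Λ.comp lam ρ h = Λ.comp a (Λ.comp (Λ.comp b c h1) ρ h9) h12 :=
    e0.trans (Λ.assoc' h2 h9 _ h12)
  have e2 : Λ.comp lam ρ h
      = Λ.comp a (Λ.comp b (Λ.comp c ρ h10) h11) (h2.trans (by rw [Λ.r_comp, Λ.r_comp])) :=
    e1.trans (Λ.comp_congr_s14 rfl (Λ.assoc' h1 h10 h9 h11) _ _)
  exact ⟨hd, a, Λ.comp c ρ h10, h11, _, ha, e2⟩

lemma IsSeg.of_initSeg {lam lam' b : Λ.Mor} {p q : Fin k → ℕ}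
    (hb : Λ.IsSeg lam p q b) (hext : Λ.InitSeg lam lam') : Λ.IsSeg lam' p q b := by
  obtain ⟨ρ, h, e⟩ := hext
  rw [e]; exact hb.extend Λ ρ h

lemma initSeg_trans {a b c : Λ.Mor} (h1 : Λ.InitSeg a b) (h2 : Λ.InitSeg b c) :
    Λ.InitSeg a c := by
  obtain ⟨ρ, h, e⟩ := h1; obtain ⟨ρ', h', e'⟩ := h2
  have h3 : Λ.s ρ = Λ.r ρ' := by rw [e, Λ.s_comp] at h'; exact h'
  refine ⟨Λ.comp ρ ρ' h3, h.trans (Λ.r_comp ρ ρ' h3).symm, ?_⟩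
  calc c = Λ.comp b ρ' h' := e'
    _ = Λ.comp (Λ.comp a ρ h) ρ' ((Λ.s_comp a ρ h).trans h3) := Λ.comp_congr_s14 e rfl _ _
    _ = Λ.comp a (Λ.comp ρ ρ' h3) (h.trans (Λ.r_comp ρ ρ' h3).symm) := Λ.assoc' h h3 _ _

lemma initSeg_refl (a : Λ.Mor) : Λ.InitSeg a a :=
  ⟨Λ.id (Λ.s a), (Λ.r_id _).symm, (Λ.comp_id a).symm⟩

lemma d_mono_of_initSeg {a b : Λ.Mor} (h : Λ.InitSeg a b) : Λ.d a ≤ Λ.d b := by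
  obtain ⟨ρ, h, e⟩ := h
  rw [e, Λ.d_comp]; intro i; simp only [Pi.add_apply]; omega

/-- r of an initial segment equals r of the whole. -/
lemma r_sg_zero (lam : Λ.Mor) (q : Fin k → ℕ) (h1 : 0 ≤ q) (h2 : q ≤ Λ.d lam) :
    Λ.r (Λ.sg lam 0 q h1 h2) = Λ.r lam := by
  obtain ⟨hd, a, c, hh1, hh2, ha, e⟩ := Λ.isSeg_sg lam 0 q h1 h2
  have hra : Λ.r lam = Λ.r a := by rw [e, Λ.r_comp]
  calc Λ.r (Λ.sg lam 0 q h1 h2) = Λ.r (Λ.comp (Λ.sg lam 0 q h1 h2) c hh1) :=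
        (Λ.r_comp _ c hh1).symm
    _ = Λ.s a := hh2.symm
    _ = Λ.r a := Λ.s_eq_r_of_d_eq_zero ha
    _ = Λ.r lam := hra.symm

/-- s of a terminal segment equals s of the whole. -/
lemma s_sg_last (lam : Λ.Mor) (p : Fin k → ℕ) (h1 : p ≤ Λ.d lam) (h2 : Λ.d lam ≤ Λ.d lam) :
    Λ.s (Λ.sg lam p (Λ.d lam) h1 h2) = Λ.s lam := by
  obtain ⟨hd, a, c, hh1, hh2, ha, e⟩ := Λ.isSeg_sg lam p (Λ.d lam) h1 h2
  have hdc : Λ.d c = 0 := by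
    have e1 := Λ.d_comp a _ hh2
    have e2 := Λ.d_comp _ c hh1
    rw [← e] at e1
    funext i
    have i1 := congrFun e1 i; have i2 := congrFun e2 i
    have i3 := congrFun ha i; have i4 := congrFun hd i
    have i5 : p i ≤ Λ.d lam i := h1 i
    simp only [Pi.add_apply, Pi.sub_apply, Pi.zero_apply] at *
    omega
  have hsc : Λ.s lam = Λ.s c := by rw [e, Λ.s_comp, Λ.s_comp]
  rw [hsc, Λ.s_eq_r_of_d_eq_zero hdc]
  exact hh1

/-! ### Infinite path lemmas -/

lemma seg_congr' {x : Λ.InfPath} {p q p' q' : Fin k → ℕ} (hp : p = p') (hq : q = q')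
    (h1 : p ≤ q) (h2 : ∀ i, (q i : ℕ∞) ≤ x.deg i)
    (h1' : p' ≤ q') (h2' : ∀ i, (q' i : ℕ∞) ≤ x.deg i) :
    x.seg p q h1 h2 = x.seg p' q' h1' h2' := by subst hp; subst hq; rfl

lemma seg_path_congr {x y : Λ.InfPath} (hxy : x = y) {p q : Fin k → ℕ}
    (h1 : p ≤ q) (h2 : ∀ i, (q i : ℕ∞) ≤ x.deg i) (h2' : ∀ i, (q i : ℕ∞) ≤ y.deg i) :
    x.seg p q h1 h2 = y.seg p q h1 h2' := by subst hxy; rfl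

lemma path_ext {x y : Λ.InfPath} (hdeg : x.deg = y.deg)
    (hseg : ∀ p q (hpq : p ≤ q) (hqx : ∀ i, (q i : ℕ∞) ≤ x.deg i)
      (hqy : ∀ i, (q i : ℕ∞) ≤ y.deg i), x.seg p q hpq hqx = y.seg p q hpq hqy) :
    x = y := by
  cases x with
  | mk dx sx dsx csx =>
    cases y with
    | mk dy sy dsy csy =>
      dsimp only at hdeg
      subst hdeg
      have hs : sx = sy := by
        funext p q hpq hq
        exact hseg p q hpq hq hq
      subst hs
      rfl

lemma seg_isSeg (x : Λ.InfPath) (p q Q : Fin k → ℕ) (hpq : p ≤ q) (hqQ : q ≤ Q)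
    (hq : ∀ i, (q i : ℕ∞) ≤ x.deg i) (hQ : ∀ i, (Q i : ℕ∞) ≤ x.deg i) :
    Λ.IsSeg (x.seg 0 Q zero_le hQ) p q (x.seg p q hpq hq) := by
  have hp : ∀ i, (p i : ℕ∞) ≤ x.deg i := fun i => by
    refine le_trans ?_ (hq i)
    exact_mod_cast hpq i
  obtain ⟨h1, e1⟩ := x.comp_seg p q Q hpq hqQ hq hQ
  obtain ⟨h2, e2⟩ := x.comp_seg 0 p Q zero_le (hpq.trans hqQ) hp hQ
  have h2' : Λ.s (x.seg 0 p zero_le hp)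
      = Λ.r (Λ.comp (x.seg p q hpq hq) (x.seg q Q hqQ hQ) h1) := by
    rw [Λ.r_comp]
    rw [← e1, Λ.r_comp] at h2
    exact h2
  refine ⟨by rw [x.d_seg], x.seg 0 p zero_le hp, x.seg q Q hqQ hQ, h1, h2', ?_, ?_⟩
  · rw [x.d_seg]; funext i; simp
  · rw [← e2]
    exact (Λ.comp_congr_s14 rfl e1.symm _ _)

lemma seg_eq_sg (x : Λ.InfPath) (p q Q : Fin k → ℕ) (hpq : p ≤ q) (hqQ : q ≤ Q)
    (hq : ∀ i, (q i : ℕ∞) ≤ x.deg i) (hQ : ∀ i, (Q i : ℕ∞) ≤ x.deg i)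
    (hq' : q ≤ Λ.d (x.seg 0 Q zero_le hQ)) :
    x.seg p q hpq hq = Λ.sg (x.seg 0 Q zero_le hQ) p q hpq hq' :=
  ((Λ.seg_isSeg x p q Q hpq hqQ hq hQ).sg_eq Λ hpq hq').symm

/-- If two paths share an initial segment of degree `Q`, they share all
segments `(p, q)` with `q ≤ Q`. -/
lemma seg_eq_of_initial {x y : Λ.InfPath} {p q Q : Fin k → ℕ} (hpq : p ≤ q) (hqQ : q ≤ Q)
    (hq : ∀ i, (q i : ℕ∞) ≤ x.deg i) (hQ : ∀ i, (Q i : ℕ∞) ≤ x.deg i)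
    (hq' : ∀ i, (q i : ℕ∞) ≤ y.deg i) (hQ' : ∀ i, (Q i : ℕ∞) ≤ y.deg i)
    (hinit : x.seg 0 Q zero_le hQ = y.seg 0 Q zero_le hQ') :
    x.seg p q hpq hq = y.seg p q hpq hq' :=
  ((Λ.seg_isSeg x p q Q hpq hqQ hq hQ).of_initSeg Λ
    (by rw [hinit]; exact Λ.initSeg_refl _)).unique Λ
    ((Λ.seg_isSeg y p q Q hpq hqQ hq' hQ').of_initSeg Λ (Λ.initSeg_refl _))

lemma shift_congr (x : Λ.InfPath) {a a' : Fin k → ℕ} (h : a = a')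
    (ha : ∀ i, (a i : ℕ∞) ≤ x.deg i) (ha' : ∀ i, (a' i : ℕ∞) ≤ x.deg i) :
    x.shift a ha = x.shift a' ha' := by subst h; rfl

lemma shift_shift (x : Λ.InfPath) (a b : Fin k → ℕ)
    (ha : ∀ i, (a i : ℕ∞) ≤ x.deg i)
    (hb : ∀ i, (b i : ℕ∞) ≤ (x.shift a ha).deg i)
    (hab : ∀ i, ((a + b) i : ℕ∞) ≤ x.deg i) :
    (x.shift a ha).shift b hb = x.shift (a + b) hab := by
  apply Λ.path_ext
  · funext i
    show x.deg i - (a i : ℕ∞) - (b i : ℕ∞) = x.deg i - ((a + b) i : ℕ∞)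
    have : (((a + b) i : ℕ) : ℕ∞) = (a i : ℕ∞) + (b i : ℕ∞) := by
      simp [Pi.add_apply]
    rw [this, tsub_tsub]
  · intro p q hpq hqx hqy
    show x.seg (a + (b + p)) (a + (b + q)) _ _ = x.seg ((a + b) + p) ((a + b) + q) _ _
    exact Λ.seg_congr' (by rw [add_assoc]) (by rw [add_assoc]) _ _ _ _

lemma enat_sub_le' {a b : ℕ} {D : ℕ∞} (h : (a : ℕ∞) ≤ D) :
    ((a - b : ℕ) : ℕ∞) ≤ D - (b : ℕ∞) := by
  cases D with
  | top => simp
  | coe dN =>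
    rw [← ENat.coe_sub]
    have ha : a ≤ dN := by exact_mod_cast h
    exact_mod_cast Nat.sub_le_sub_right ha b

lemma InfPath.ExtendsBy.deg_z {w z : Λ.InfPath} {lam : Λ.Mor} (h : w.ExtendsBy z lam) :
    ∀ i, z.deg i = w.deg i - (Λ.d lam i : ℕ∞) := by
  obtain ⟨e, -, t⟩ := h
  intro i
  rw [← t]
  rfl

lemma InfPath.ExtendsBy.deg_w {w z : Λ.InfPath} {lam : Λ.Mor} (h : w.ExtendsBy z lam) :
    ∀ i, w.deg i = (Λ.d lam i : ℕ∞) + z.deg i := by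
  intro i
  rw [h.deg_z Λ i]
  exact (add_tsub_cancel_of_le (h.choose i)).symm

lemma InfPath.ExtendsBy.le_deg {w z : Λ.InfPath} {lam : Λ.Mor} (h : w.ExtendsBy z lam) :
    ∀ i, (Λ.d lam i : ℕ∞) ≤ w.deg i := h.choose

lemma InfPath.ExtendsBy.z_le {w z : Λ.InfPath} {lam : Λ.Mor} (h : w.ExtendsBy z lam)
    {q : Fin k → ℕ} (hq : ∀ i, (q i : ℕ∞) ≤ w.deg i) :
    ∀ i, ((q - Λ.d lam) i : ℕ∞) ≤ z.deg i := by
  intro i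
  rw [h.deg_z Λ i]
  exact enat_sub_le' (hq i)

lemma InfPath.ExtendsBy.seg_eq_comp {w z : Λ.InfPath} {lam : Λ.Mor} (h : w.ExtendsBy z lam)
    (Q : Fin k → ℕ) (hQl : Λ.d lam ≤ Q) (hQ : ∀ i, (Q i : ℕ∞) ≤ w.deg i)
    (hQz : ∀ i, ((Q - Λ.d lam) i : ℕ∞) ≤ z.deg i) :
    ∃ hc : Λ.s lam = Λ.r (z.seg 0 (Q - Λ.d lam) zero_le hQz),
      w.seg 0 Q zero_le hQ = Λ.comp lam _ hc := by
  obtain ⟨e, s1, t1⟩ := h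
  obtain ⟨hh1, ee1⟩ := w.comp_seg 0 (Λ.d lam) Q zero_le hQl e hQ
  have hsh : ∀ i, ((Q - Λ.d lam) i : ℕ∞) ≤ (w.shift (Λ.d lam) e).deg i := by
    intro i; exact enat_sub_le' (hQ i)
  have emid : w.seg (Λ.d lam) Q hQl hQ
      = z.seg 0 (Q - Λ.d lam) zero_le hQz := by
    have e1 : (w.shift (Λ.d lam) e).seg 0 (Q - Λ.d lam) zero_le hsh
        = w.seg (Λ.d lam) Q hQl hQ := by
      show w.seg (Λ.d lam + 0) (Λ.d lam + (Q - Λ.d lam)) _ _ = _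
      refine Λ.seg_congr' (by rw [add_zero]) ?_ _ _ _ _
      funext i
      have h5 : Λ.d lam i ≤ Q i := hQl i
      simp only [Pi.add_apply, Pi.sub_apply]
      omega
    rw [← e1]
    exact Λ.seg_path_congr t1 _ _ _
  have hc : Λ.s lam = Λ.r (z.seg 0 (Q - Λ.d lam) zero_le hQz) :=
    (congrArg Λ.s s1).symm.trans (hh1.trans (congrArg Λ.r emid))
  refine ⟨hc, ?_⟩
  rw [← ee1]
  exact Λ.comp_congr_s14 s1 emid _ _

/-- Two paths extending the same path by the same morphism coincide. -/
lemma extends_unique {w₁ w₂ z : Λ.InfPath} {lam : Λ.Mor}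
    (h1 : w₁.ExtendsBy z lam) (h2 : w₂.ExtendsBy z lam) : w₁ = w₂ := by
  have hdeg : w₁.deg = w₂.deg := by
    funext i
    rw [h1.deg_w Λ i, h2.deg_w Λ i]
  have key : ∀ q (hq1 : ∀ i, (q i : ℕ∞) ≤ w₁.deg i) (hq2 : ∀ i, (q i : ℕ∞) ≤ w₂.deg i),
      w₁.seg 0 q zero_le hq1 = w₂.seg 0 q zero_le hq2 := by
    intro q hq1 hq2
    set Q := q ⊔ Λ.d lam with hQdef
    have hQ1 : ∀ i, (Q i : ℕ∞) ≤ w₁.deg i := by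
      intro i
      show ((max (q i) (Λ.d lam i) : ℕ) : ℕ∞) ≤ _
      rcases max_cases (q i) (Λ.d lam i) with ⟨hm, -⟩ | ⟨hm, -⟩ <;> rw [hm]
      · exact hq1 i
      · exact h1.le_deg Λ i
    have hQ2 : ∀ i, (Q i : ℕ∞) ≤ w₂.deg i := by
      intro i; rw [← congrFun hdeg i]; exact hQ1 i
    have hQz : ∀ i, ((Q - Λ.d lam) i : ℕ∞) ≤ z.deg i := h1.z_le Λ hQ1
    obtain ⟨hc1, ec1⟩ := h1.seg_eq_comp Λ Q le_sup_right hQ1 hQz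
    obtain ⟨hc2, ec2⟩ := h2.seg_eq_comp Λ Q le_sup_right hQ2 hQz
    have hQeq : w₁.seg 0 Q zero_le hQ1 = w₂.seg 0 Q zero_le hQ2 := by
      rw [ec1, ec2]
    exact Λ.seg_eq_of_initial zero_le le_sup_left hq1 hQ1 hq2 hQ2 hQeq
  apply Λ.path_ext hdeg
  intro p q hpq hqx hqy
  exact Λ.seg_eq_of_initial hpq le_rfl hqx hqx hqy hqy (key q hqx hqy)

/-- Pulling back a finite exhaustive set along a morphism. -/
lemma FE_pullback (hFA : Λ.FinitelyAligned) {v : Λ.Obj} {E : Set Λ.Mor} (hE : Λ.IsFE v E)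
    (μ' : Λ.Mor) (hμ : Λ.r μ' = v) :
    Λ.IsFE (Λ.s μ')
      {τ | ∃ h : Λ.s μ' = Λ.r τ, ∃ lam' ∈ E, Λ.comp μ' τ h ∈ Λ.MCE μ' lam'} := by
  set F := {τ | ∃ h : Λ.s μ' = Λ.r τ, ∃ lam' ∈ E, Λ.comp μ' τ h ∈ Λ.MCE μ' lam'} with hF
  refine ⟨?_, ?_, ?_⟩
  · -- finiteness
    classical
    have hsub : F ⊆ (fun ξ => if h : Λ.d μ' ≤ Λ.d ξ then Λ.sg ξ (Λ.d μ') (Λ.d ξ) h le_rfl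
        else ξ) '' (⋃ lam' ∈ E, Λ.MCE μ' lam') := by
      rintro τ ⟨h, lam', hlam', hm⟩
      refine ⟨Λ.comp μ' τ h, Set.mem_biUnion hlam' hm, ?_⟩
      have hle : Λ.d μ' ≤ Λ.d (Λ.comp μ' τ h) := by
        rw [Λ.d_comp]; intro i; simp only [Pi.add_apply]; omega
      simp only [dif_pos hle]
      exact (Λ.isSeg_of_comp' h rfl rfl).sg_eq Λ hle le_rfl
    exact Set.Finite.subset ((hE.1.biUnion (fun lam' _ => hFA μ' lam')).image _) hsub
  · rintro τ ⟨h, -⟩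
    exact h.symm
  · -- exhaustivity
    intro ρ hρ
    obtain ⟨lam', hlamE, κ, hκ⟩ := hE.2.2 (Λ.comp μ' ρ hρ.symm) (by rw [Λ.r_comp]; exact hμ)
    obtain ⟨hdκ, hIa, hIb⟩ := hκ
    obtain ⟨θ, hθ, eθ⟩ := hIa
    obtain ⟨θ', hθ', eθ'⟩ := hIb
    have hρθ : Λ.s ρ = Λ.r θ := by rw [Λ.s_comp] at hθ; exact hθ
    have eκ : κ = Λ.comp μ' (Λ.comp ρ θ hρθ) (hρ.symm.trans (Λ.r_comp ρ θ hρθ).symm) :=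
      eθ.trans (Λ.assoc' hρ.symm hρθ hθ _)
    have hdκ2 : Λ.d κ = (Λ.d μ' + Λ.d ρ) ⊔ Λ.d lam' := by
      rw [hdκ, Λ.d_comp]
    have hsup1 : Λ.d μ' ⊔ Λ.d lam' ≤ Λ.d κ := by
      intro i
      have := congrFun hdκ2 i
      simp only [Pi.sup_apply, Pi.add_apply] at *
      omega
    have hA : Λ.d μ' ≤ Λ.d μ' ⊔ Λ.d lam' := le_sup_left
    set τ := Λ.sg κ (Λ.d μ') (Λ.d μ' ⊔ Λ.d lam') hA hsup1 with hτ
    have hμseg : Λ.sg κ 0 (Λ.d μ') zero_le (hA.trans hsup1) = μ' :=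
      (Λ.isSeg_of_comp _ eκ rfl).sg_eq Λ zero_le (hA.trans hsup1)
    obtain ⟨hc1, ec1⟩ := Λ.sg_comp κ 0 (Λ.d μ') (Λ.d μ' ⊔ Λ.d lam') zero_le hA hsup1
    have hμτ : Λ.s μ' = Λ.r τ := by rw [← hμseg]; exact hc1
    have eξ : Λ.comp μ' τ hμτ
        = Λ.sg κ 0 (Λ.d μ' ⊔ Λ.d lam') zero_le hsup1 :=
      (Λ.comp_congr_s14 hμseg.symm rfl hμτ hc1).trans ec1
    have hclam : Λ.d lam' ≤ Λ.d κ := le_sup_right.trans hsup1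
    have hlamseg : Λ.sg κ 0 (Λ.d lam') zero_le hclam = lam' :=
      (Λ.isSeg_of_comp hθ' eθ' rfl).sg_eq Λ zero_le hclam
    have hξmem : Λ.comp μ' τ hμτ ∈ Λ.MCE μ' lam' := by
      refine ⟨?_, ⟨τ, hμτ, rfl⟩, ?_⟩
      · rw [eξ, Λ.d_sg]
        funext i; simp
      · obtain ⟨hc2, ec2⟩ :=
          Λ.sg_comp κ 0 (Λ.d lam') (Λ.d μ' ⊔ Λ.d lam') zero_le le_sup_right hsup1
        refine ⟨Λ.sg κ (Λ.d lam') (Λ.d μ' ⊔ Λ.d lam') le_sup_right hsup1,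
          (congrArg Λ.s hlamseg).symm.trans hc2, ?_⟩
        rw [eξ, ← ec2]
        exact Λ.comp_congr_s14 hlamseg rfl _ _
    have hτF : τ ∈ F := ⟨hμτ, lam', hlamE, hξmem⟩
    have hAκ : Λ.d μ' ≤ Λ.d κ := hA.trans hsup1
    set κ' := Λ.sg κ (Λ.d μ') (Λ.d κ) hAκ le_rfl with hκ'
    have hκ'eq : κ' = Λ.comp ρ θ hρθ :=
      (Λ.isSeg_of_comp' _ eκ rfl).sg_eq Λ hAκ le_rfl
    have hdκ' : Λ.d κ' = Λ.d ρ ⊔ Λ.d τ := by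
      rw [hκ', Λ.d_sg, hτ, Λ.d_sg]
      funext i
      have := congrFun hdκ2 i
      simp only [Pi.sup_apply, Pi.add_apply, Pi.sub_apply] at *
      omega
    obtain ⟨hc3, ec3⟩ :=
      Λ.sg_comp κ (Λ.d μ') (Λ.d μ' ⊔ Λ.d lam') (Λ.d κ) hA hsup1 le_rfl
    exact ⟨τ, hτF, κ', hdκ', ⟨θ, hρθ, hκ'eq⟩,
      ⟨Λ.sg κ (Λ.d μ' ⊔ Λ.d lam') (Λ.d κ) hsup1 le_rfl, hc3, ec3.symm⟩⟩

lemma r_seg_eq (x : Λ.InfPath) {p q : Fin k → ℕ} (h1 : p ≤ q)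
    (h2 : ∀ i, (q i : ℕ∞) ≤ x.deg i) (hp : ∀ i, (p i : ℕ∞) ≤ x.deg i) :
    Λ.r (x.seg p q h1 h2) = x.vert p hp := by
  obtain ⟨h, e⟩ := x.comp_seg p p q le_rfl h1 hp h2
  rw [← e, Λ.r_comp]
  rfl

lemma s_seg_eq (x : Λ.InfPath) {p q : Fin k → ℕ} (h1 : p ≤ q)
    (h2 : ∀ i, (q i : ℕ∞) ≤ x.deg i) :
    Λ.s (x.seg p q h1 h2) = x.vert q h2 := by
  obtain ⟨h, e⟩ := x.comp_seg p q q h1 le_rfl h2 h2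
  exact h

/-- Boundary paths are stable under prepending a finite path. -/
lemma boundary_extends (hFA : Λ.FinitelyAligned) {w z : Λ.InfPath} {lam : Λ.Mor}
    (hz : Λ.IsBoundary z) (hw : w.ExtendsBy z lam) : Λ.IsBoundary w := by
  intro n hn E hE
  set N := n ⊔ Λ.d lam with hNdef
  have hnN : n ≤ N := le_sup_left
  have hlamN : Λ.d lam ≤ N := le_sup_right
  have hN : ∀ i, (N i : ℕ∞) ≤ w.deg i := by
    intro i
    show ((max (n i) (Λ.d lam i) : ℕ) : ℕ∞) ≤ _
    rcases max_cases (n i) (Λ.d lam i) with ⟨hm, -⟩ | ⟨hm, -⟩ <;> rw [hm]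
    · exact hn i
    · exact hw.le_deg Λ i
  set μ' := w.seg n N hnN hN with hμ'def
  have hdμ' : Λ.d μ' = N - n := w.d_seg n N hnN hN
  have hrμ' : Λ.r μ' = w.vert n hn := Λ.r_seg_eq w hnN hN hn
  have hFE' := Λ.FE_pullback hFA hE μ' hrμ'
  set n' := N - Λ.d lam with hn'def
  have hn' : ∀ i, (n' i : ℕ∞) ≤ z.deg i := hw.z_le Λ hN
  have hdegw := hw.deg_w Λ
  obtain ⟨e, s1, t1⟩ := hw
  have hshn' : ∀ i, (n' i : ℕ∞) ≤ (w.shift (Λ.d lam) e).deg i := by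
    intro i; exact enat_sub_le' (hN i)
  have hvert : z.vert n' hn' = Λ.s μ' := by
    have e1 : z.seg n' n' le_rfl hn' = w.seg N N le_rfl hN := by
      rw [← Λ.seg_path_congr t1 le_rfl hshn' hn']
      show w.seg (Λ.d lam + n') (Λ.d lam + n') _ _ = _
      refine Λ.seg_congr' ?_ ?_ _ _ _ _ <;>
      · funext i
        have h5 : Λ.d lam i ≤ N i := hlamN i
        simp only [hn'def, Pi.add_apply, Pi.sub_apply]
        omega
    show Λ.r (z.seg n' n' le_rfl hn') = _
    rw [e1, hμ'def, Λ.s_seg_eq w hnN hN]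
    rfl
  obtain ⟨p', hp', hmem⟩ := hz n' hn' _ (show Λ.IsFE (z.vert n' hn')
    {τ | ∃ h : Λ.s μ' = Λ.r τ, ∃ lam' ∈ E, Λ.comp μ' τ h ∈ Λ.MCE μ' lam'} by
    rw [hvert]; exact hFE')
  obtain ⟨hcm, lam', hlam'E, hMCE⟩ := hmem
  -- translate the z-segment into a w-segment
  have hNp : ∀ i, ((N + p') i : ℕ∞) ≤ w.deg i := by
    intro i
    rw [hdegw i]
    have e5 : ((N + p') i : ℕ) = Λ.d lam i + (n' + p') i := by
      have h5 : Λ.d lam i ≤ N i := hlamN i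
      simp only [hn'def, Pi.add_apply, Pi.sub_apply]
      omega
    rw [e5]
    push_cast
    exact add_le_add_right (hp' i) _
  have hp'' : ∀ i, ((n' + p') i : ℕ∞) ≤ (w.shift (Λ.d lam) e).deg i := by
    intro i; rw [t1]; exact hp' i
  have hseg_eq : z.seg n' (n' + p') le_self_add hp'
      = w.seg N (N + p') le_self_add hNp := by
    have e2 : (w.shift (Λ.d lam) e).seg n' (n' + p') le_self_add hp''
        = w.seg N (N + p') le_self_add hNp := by
      show w.seg (Λ.d lam + n') (Λ.d lam + (n' + p')) _ _ = _
      refine Λ.seg_congr' ?_ ?_ _ _ _ _ <;>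
      · funext i
        have h5 : Λ.d lam i ≤ N i := hlamN i
        simp only [hn'def, Pi.add_apply, Pi.sub_apply]
        omega
    rw [← e2]
    exact (Λ.seg_path_congr t1 le_self_add hp'' hp').symm
  have hcm' : Λ.s μ' = Λ.r (w.seg N (N + p') le_self_add hNp) := by
    rw [← hseg_eq]; exact hcm
  have hξ : Λ.comp μ' (w.seg N (N + p') le_self_add hNp) hcm' ∈ Λ.MCE μ' lam' := by
    rw [← Λ.comp_congr_s14 rfl hseg_eq hcm hcm']
    exact hMCE
  obtain ⟨h7, e7⟩ := w.comp_seg n N (N + p') hnN le_self_add hN hNp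
  have hξ2 : w.seg n (N + p') (hnN.trans le_self_add) hNp ∈ Λ.MCE μ' lam' := by
    rw [← e7]
    exact hξ
  obtain ⟨hdξ, -, hIlam⟩ := hξ2
  obtain ⟨ρ₃, h₃, e₃⟩ := hIlam
  -- bound: n + d lam' ≤ N + p'
  have hle1 : n + Λ.d lam' ≤ N + p' := by
    intro i
    have i1 := congrFun hdξ i
    have i2 := congrFun (w.d_seg n (N + p') (hnN.trans le_self_add) hNp) i
    have i3 := congrFun hdμ' i
    have i4 : n i ≤ N i := hnN i
    simp only [Pi.add_apply, Pi.sub_apply, Pi.sup_apply] at i1 i2 i3 ⊢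
    omega
  -- the shifted path
  set y := w.shift n hn with hydef
  have hQ'z : ∀ i, (((N + p') - n) i : ℕ∞) ≤ y.deg i := by
    intro i; exact enat_sub_le' (hNp i)
  have hsub : Λ.d lam' ≤ (N + p') - n := by
    intro i
    have i1 := hle1 i
    simp only [Pi.add_apply, Pi.sub_apply] at i1 ⊢
    omega
  have hql : ∀ i, (Λ.d lam' i : ℕ∞) ≤ y.deg i := by
    intro i
    refine le_trans ?_ (hQ'z i)
    exact_mod_cast hsub i
  have e8 : y.seg 0 ((N + p') - n) zero_le hQ'z
      = w.seg n (N + p') (hnN.trans le_self_add) hNp := by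
    show w.seg (n + 0) (n + ((N + p') - n)) _ _ = _
    refine Λ.seg_congr' (add_zero n) ?_ _ _ _ _
    funext i
    have i4 : n i ≤ N i := hnN i
    simp only [Pi.add_apply, Pi.sub_apply]
    omega
  have hIs1 : Λ.IsSeg (w.seg n (N + p') (hnN.trans le_self_add) hNp) 0 (Λ.d lam')
      (y.seg 0 (Λ.d lam') zero_le hql) := by
    have h9 := Λ.seg_isSeg y 0 (Λ.d lam') ((N + p') - n) zero_le hsub hql hQ'z
    rwa [e8] at h9
  have hIs2 : Λ.IsSeg (w.seg n (N + p') (hnN.trans le_self_add) hNp) 0 (Λ.d lam') lam' :=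
    Λ.isSeg_of_comp h₃ e₃ rfl
  have e9 : y.seg 0 (Λ.d lam') zero_le hql = lam' := hIs1.unique Λ hIs2
  have hp : ∀ i, ((n + Λ.d lam') i : ℕ∞) ≤ w.deg i := by
    intro i
    refine le_trans ?_ (hNp i)
    exact_mod_cast hle1 i
  refine ⟨Λ.d lam', hp, ?_⟩
  have e10 : w.seg n (n + Λ.d lam') le_self_add hp
      = y.seg 0 (Λ.d lam') zero_le hql := by
    show _ = w.seg (n + 0) (n + Λ.d lam') _ _
    exact Λ.seg_congr' (add_zero n).symm rfl _ _ _ _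
  rw [e10, e9]
  exact hlam'E

lemma r_sg_eq' (lam : Λ.Mor) (p q : Fin k → ℕ) (hpq : p ≤ q) (hq : q ≤ Λ.d lam) :
    Λ.r (Λ.sg lam p q hpq hq) = Λ.r (Λ.sg lam p p le_rfl (hpq.trans hq)) := by
  obtain ⟨h, e⟩ := Λ.sg_comp lam p p q le_rfl hpq hq
  have := congrArg Λ.r e
  rw [Λ.r_comp] at this
  exact this.symm

/-- The requirement `(nn, F)` is active for `lam`. -/
def Active (lam : Λ.Mor) (nn : Fin k → ℕ) (F : Set Λ.Mor) : Prop :=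
  ∃ h : nn ≤ Λ.d lam, Λ.IsFE (Λ.r (Λ.sg lam nn nn le_rfl h)) F

/-- The requirement `(nn, F)` is satisfied by `lam`. -/
def SatB (lam : Λ.Mor) (nn : Fin k → ℕ) (F : Set Λ.Mor) : Prop :=
  ∃ (p : Fin k → ℕ) (h2 : nn + p ≤ Λ.d lam), Λ.sg lam nn (nn + p) le_self_add h2 ∈ F

lemma step_exists (v : Λ.Obj) (lam : Λ.Mor) (hr : Λ.r lam = v) (nn : Fin k → ℕ)
    (F : Set Λ.Mor) :
    ∃ lam', Λ.r lam' = v ∧ Λ.InitSeg lam lam' ∧ (Λ.Active lam nn F → Λ.SatB lam' nn F) := by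
  by_cases hA : Λ.Active lam nn F
  case neg => exact ⟨lam, hr, Λ.initSeg_refl lam, fun h => absurd h hA⟩
  case pos =>
    obtain ⟨hle, hFE⟩ := hA
    set μ'' := Λ.sg lam nn (Λ.d lam) hle le_rfl with hμ''
    have hrv : Λ.r μ'' = Λ.r (Λ.sg lam nn nn le_rfl hle) := Λ.r_sg_eq' lam nn (Λ.d lam) hle le_rfl
    obtain ⟨α₀, hα₀F, κ, hdκ, hIμ, hIα⟩ := hFE.2.2 μ'' hrv
    obtain ⟨ρ, hρ, eκ1⟩ := hIμ
    obtain ⟨θ', hθ', eκ2⟩ := hIα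
    have hslam : Λ.s lam = Λ.r ρ := (Λ.s_sg_last lam nn hle le_rfl).symm.trans hρ
    refine ⟨Λ.comp lam ρ hslam, by rw [Λ.r_comp]; exact hr, ⟨ρ, hslam, rfl⟩, fun _ => ?_⟩
    obtain ⟨hc, ec⟩ := Λ.sg_comp lam 0 nn (Λ.d lam) zero_le hle le_rfl
    have ecw : Λ.comp (Λ.sg lam 0 nn zero_le (hle.trans le_rfl)) μ'' hc = lam := by
      rw [ec]; exact Λ.sg_whole lam _ _
    have h11 : Λ.s (Λ.sg lam 0 nn zero_le (hle.trans le_rfl)) = Λ.r (Λ.comp μ'' ρ hρ) :=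
      hc.trans (Λ.r_comp μ'' ρ hρ).symm
    have e11 : Λ.comp lam ρ hslam
        = Λ.comp (Λ.sg lam 0 nn zero_le (hle.trans le_rfl)) (Λ.comp μ'' ρ hρ) h11 :=
      (Λ.comp_congr_s14 ecw.symm rfl hslam ((Λ.s_comp _ _ hc).trans hρ)).trans
        (Λ.assoc' hc hρ _ h11)
    have h12 : Λ.s (Λ.sg lam 0 nn zero_le (hle.trans le_rfl)) = Λ.r (Λ.comp α₀ θ' hθ') :=
      h11.trans (congrArg Λ.r (eκ1.symm.trans eκ2))
    have e12 : Λ.comp lam ρ hslam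
        = Λ.comp (Λ.sg lam 0 nn zero_le (hle.trans le_rfl)) (Λ.comp α₀ θ' hθ') h12 :=
      e11.trans (Λ.comp_congr_s14 rfl (eκ1.symm.trans eκ2) h11 h12)
    have hd0n : Λ.d (Λ.sg lam 0 nn zero_le (hle.trans le_rfl)) = nn := by
      rw [Λ.d_sg]; funext i; simp
    have hIsSeg : Λ.IsSeg (Λ.comp lam ρ hslam) nn (nn + Λ.d α₀) α₀ := by
      refine ⟨?_, Λ.sg lam 0 nn zero_le (hle.trans le_rfl), θ', hθ', h12, hd0n, e12⟩
      funext i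
      simp only [Pi.add_apply, Pi.sub_apply]
      omega
    have hbound : nn + Λ.d α₀ ≤ Λ.d (Λ.comp lam ρ hslam) := by
      intro i
      have i1 := congrFun (Λ.d_comp lam ρ hslam) i
      have i2 := congrFun hdκ i
      have i4 := congrFun (congrArg Λ.d eκ1) i
      have i4' := congrFun (Λ.d_comp μ'' ρ hρ) i
      have i5' : Λ.d μ'' = Λ.d lam - nn := by rw [hμ'']; exact Λ.d_sg lam nn (Λ.d lam) hle le_rfl
      have i5 := congrFun i5' i
      have i6 : nn i ≤ Λ.d lam i := hle i
      simp only [Pi.add_apply, Pi.sub_apply, Pi.sup_apply] at i1 i2 i4 i4' i5 ⊢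
      omega
    exact ⟨Λ.d α₀, hbound, by rw [hIsSeg.sg_eq Λ le_self_add hbound]; exact hα₀F⟩

/-- Every vertex of a `k`-graph receives a boundary path. -/
lemma exists_boundary (v : Λ.Obj) : ∃ x : Λ.InfPath, Λ.IsBoundary x ∧ x.rng = v := by
  classical
  haveI := Λ.countableMor
  obtain ⟨g0, hg0⟩ := exists_surjective_nat (ℕ × ((Fin k → ℕ) × Finset Λ.Mor))
  choose step hstep1 hstep2 hstep3 using Λ.step_exists v
  obtain ⟨L, hL0, hLs⟩ : ∃ L : ℕ → {m : Λ.Mor // Λ.r m = v},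
      L 0 = ⟨Λ.id v, Λ.r_id v⟩ ∧ ∀ i, L (i + 1)
        = ⟨step (L i).1 (L i).2 (g0 i).2.1 ↑((g0 i).2.2), hstep1 (L i).1 (L i).2 _ _⟩ :=
    ⟨fun i => Nat.rec ⟨Λ.id v, Λ.r_id v⟩
      (fun j prev => ⟨step prev.1 prev.2 (g0 j).2.1 ↑((g0 j).2.2),
        hstep1 prev.1 prev.2 _ _⟩) i,
      rfl, fun i => rfl⟩
  have hChain : ∀ i j, i ≤ j → Λ.InitSeg (L i).1 (L j).1 := by
    intro i j hij
    induction j, hij using Nat.le_induction with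
    | base => exact Λ.initSeg_refl _
    | succ j hij ih =>
      refine Λ.initSeg_trans ih ?_
      rw [hLs j]
      exact hstep2 (L j).1 (L j).2 _ _
  have hdmono : ∀ i j, i ≤ j → Λ.d (L i).1 ≤ Λ.d (L j).1 :=
    fun i j h => Λ.d_mono_of_initSeg (hChain i j h)
  set D : Fin k → ℕ∞ := fun c => ⨆ j, (Λ.d (L j).1 c : ℕ∞) with hD
  have hexists_dom : ∀ (q : Fin k → ℕ), (∀ c, (q c : ℕ∞) ≤ D c) → ∃ j, q ≤ Λ.d (L j).1 := by
    intro q hq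
    have hc : ∀ c, ∃ j, q c ≤ Λ.d (L j).1 c := by
      intro c
      by_contra hcon
      push_neg at hcon
      have h1 : D c ≤ ((q c - 1 : ℕ) : ℕ∞) := by
        refine iSup_le fun j => ?_
        have h4 := hcon j
        exact_mod_cast Nat.le_sub_one_of_lt h4
      have h2 := (hq c).trans h1
      rw [Nat.cast_le] at h2
      have h3 : 0 < q c := lt_of_le_of_lt (Nat.zero_le _) (hcon 0)
      omega
    choose jc hjc using hc
    refine ⟨Finset.univ.sup jc, fun c => ?_⟩
    exact (hjc c).trans (hdmono _ _ (Finset.le_sup (Finset.mem_univ c)) c)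
  choose jf hjf using hexists_dom
  have hstab : ∀ {i j : ℕ} (hij : i ≤ j) (p q : Fin k → ℕ) (hpq : p ≤ q)
      (hq : q ≤ Λ.d (L i).1) (hq' : q ≤ Λ.d (L j).1),
      Λ.sg (L j).1 p q hpq hq' = Λ.sg (L i).1 p q hpq hq :=
    fun hij p q hpq hq hq' =>
      ((Λ.isSeg_sg (L _).1 p q hpq hq).of_initSeg Λ (hChain _ _ hij)).sg_eq Λ hpq hq'
  refine ⟨⟨D, fun p q hpq hq => Λ.sg (L (jf q hq)).1 p q hpq (hjf q hq),
    fun p q hpq hq => Λ.d_sg _ p q hpq (hjf q hq),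
    fun p q r hpq hqr hq hr => ?_⟩, ?_, ?_⟩
  · -- comp_seg
    have hqJ : q ≤ Λ.d (L (max (jf q hq) (jf r hr))).1 :=
      (hjf q hq).trans (hdmono _ _ (le_max_left _ _))
    have hrJ : r ≤ Λ.d (L (max (jf q hq) (jf r hr))).1 :=
      (hjf r hr).trans (hdmono _ _ (le_max_right _ _))
    have e1 : Λ.sg (L (jf q hq)).1 p q hpq (hjf q hq)
        = Λ.sg (L (max (jf q hq) (jf r hr))).1 p q hpq hqJ :=
      (hstab (le_max_left _ _) p q hpq (hjf q hq) hqJ).symm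
    have e2 : Λ.sg (L (jf r hr)).1 q r hqr (hjf r hr)
        = Λ.sg (L (max (jf q hq) (jf r hr))).1 q r hqr hrJ :=
      (hstab (le_max_right _ _) q r hqr (hjf r hr) hrJ).symm
    have e3 : Λ.sg (L (jf r hr)).1 p r (hpq.trans hqr) (hjf r hr)
        = Λ.sg (L (max (jf q hq) (jf r hr))).1 p r (hpq.trans hqr) hrJ :=
      (hstab (le_max_right _ _) p r (hpq.trans hqr) (hjf r hr) hrJ).symm
    obtain ⟨hh, ee⟩ := Λ.sg_comp (L (max (jf q hq) (jf r hr))).1 p q r hpq hqr hrJ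
    have h0 : Λ.s (Λ.sg (L (jf q hq)).1 p q hpq (hjf q hq))
        = Λ.r (Λ.sg (L (jf r hr)).1 q r hqr (hjf r hr)) := by
      rw [e1, e2]; exact hh
    refine ⟨h0, ?_⟩
    calc Λ.comp (Λ.sg (L (jf q hq)).1 p q hpq (hjf q hq))
          (Λ.sg (L (jf r hr)).1 q r hqr (hjf r hr)) h0
        = Λ.comp (Λ.sg (L (max (jf q hq) (jf r hr))).1 p q hpq hqJ)
          (Λ.sg (L (max (jf q hq) (jf r hr))).1 q r hqr hrJ) hh := Λ.comp_congr_s14 e1 e2 h0 hh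
      _ = Λ.sg (L (max (jf q hq) (jf r hr))).1 p r (hpq.trans hqr) hrJ := ee
      _ = Λ.sg (L (jf r hr)).1 p r (hpq.trans hqr) (hjf r hr) := e3.symm
  · -- boundary
    intro nn hnn E hE
    have hjv := hjf nn hnn
    have hinf : {i : ℕ | (g0 i).2 = (nn, hE.1.toFinset)}.Infinite := by
      apply Set.infinite_of_injective_forall_mem
        (f := fun m : ℕ => (hg0 (m, (nn, hE.1.toFinset))).choose)
      · intro m m' he
        have s1 := (hg0 (m, (nn, hE.1.toFinset))).choose_spec
        have s2 := (hg0 (m', (nn, hE.1.toFinset))).choose_spec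
        have he' : (hg0 (m, (nn, hE.1.toFinset))).choose
            = (hg0 (m', (nn, hE.1.toFinset))).choose := he
        rw [he', s2] at s1
        exact ((Prod.mk.injEq _ _ _ _).mp s1).1.symm
      · intro m
        have s1 := (hg0 (m, (nn, hE.1.toFinset))).choose_spec
        show (g0 _).2 = _
        rw [s1]
    obtain ⟨i, hiS, hilt⟩ := hinf.exists_gt (jf nn hnn)
    have hnni : nn ≤ Λ.d (L i).1 := hjv.trans (hdmono _ _ hilt.le)
    have hvert_eq : Λ.r (Λ.sg (L i).1 nn nn le_rfl hnni)
        = Λ.r (Λ.sg (L (jf nn hnn)).1 nn nn le_rfl hjv) :=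
      congrArg Λ.r (hstab hilt.le nn nn le_rfl hjv hnni)
    have hFs : (↑(hE.1.toFinset) : Set Λ.Mor) = E := Set.Finite.coe_toFinset _
    have hact : Λ.Active (L i).1 (g0 i).2.1 ↑((g0 i).2.2) := by
      rw [hiS]
      refine ⟨hnni, ?_⟩
      rw [hvert_eq, hFs]
      exact hE
    have hsat : Λ.SatB (L (i + 1)).1 (g0 i).2.1 ↑((g0 i).2.2) := by
      rw [hLs i]
      exact hstep3 (L i).1 (L i).2 _ _ hact
    rw [hiS] at hsat
    obtain ⟨p, h2, hmem⟩ := hsat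
    have hp : ∀ c, ((nn + p) c : ℕ∞) ≤ D c := by
      intro c
      refine le_trans ?_ (le_iSup (fun j => (Λ.d (L j).1 c : ℕ∞)) (i + 1))
      exact_mod_cast h2 c
    refine ⟨p, hp, ?_⟩
    show Λ.sg (L (jf (nn + p) hp)).1 nn (nn + p) le_self_add (hjf (nn + p) hp) ∈ E
    have hJ2 : nn + p ≤ Λ.d (L (max (i + 1) (jf (nn + p) hp))).1 :=
      (hjf _ hp).trans (hdmono _ _ (le_max_right _ _))
    have e1 := hstab (le_max_right (i + 1) (jf (nn + p) hp)) nn (nn + p) le_self_add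
      (hjf _ hp) hJ2
    have e2 := hstab (le_max_left (i + 1) (jf (nn + p) hp)) nn (nn + p) le_self_add h2 hJ2
    rw [← e1, e2, ← hFs]
    exact hmem
  · -- range
    show Λ.r (Λ.sg (L (jf 0 _)).1 0 0 le_rfl (hjf 0 _)) = v
    rw [Λ.r_sg_zero]
    exact (L _).2

lemma shift_path_congr {x y : Λ.InfPath} (hxy : x = y) {a : Fin k → ℕ}
    (ha : ∀ i, (a i : ℕ∞) ≤ x.deg i) (ha' : ∀ i, (a i : ℕ∞) ≤ y.deg i) :
    x.shift a ha = y.shift a ha' := by subst hxy; rfl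

/-- If `Λ` has local periodicity `m, n` at `v`, then there exist
`μ, ν, α` with `r(μ) = r(ν) = v`, `s(μ) = s(ν) = r(α)`, `d(μ) = m`,
`d(ν) = n`, and `μαz = ναz` for every boundary path `z` with
`r(z) = s(α)`. -/
theorem local_periodicity_witnesses (hFA : Λ.FinitelyAligned)
    (m n : Fin k → ℕ) (v : Λ.Obj) (hlp : Λ.LocalPeriodicity m n v) :
    ∃ (μ ν α : Λ.Mor) (h1 : Λ.s μ = Λ.r α) (h2 : Λ.s ν = Λ.r α),
      Λ.r μ = v ∧ Λ.r ν = v ∧ Λ.d μ = m ∧ Λ.d ν = n ∧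
      ∀ z w₁ w₂ : Λ.InfPath, Λ.IsBoundary z → z.rng = Λ.s α →
        w₁.ExtendsBy z (Λ.comp μ α h1) → w₂.ExtendsBy z (Λ.comp ν α h2) →
        w₁ = w₂ := by
  obtain ⟨x, hxb, hxr⟩ := Λ.exists_boundary v
  obtain ⟨hbig, hm, hn, hshift⟩ := hlp x hxb hxr
  have hmle : ∀ i, (m i : ℕ∞) ≤ x.deg i := hm
  have hsup : ∀ i, ((m ⊔ n) i : ℕ∞) ≤ x.deg i := hbig
  set μ := x.seg 0 m zero_le hm with hμdef
  set ν := x.seg 0 n zero_le hn with hνdef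
  set α := x.seg m (m ⊔ n) le_sup_left hsup with hαdef
  -- h1
  obtain ⟨h1, exmn⟩ := x.comp_seg 0 m (m ⊔ n) zero_le le_sup_left hm hsup
  -- x(m) = x(n)
  have h0m : ∀ i, ((0 : Fin k → ℕ) i : ℕ∞) ≤ (x.shift m hm).deg i := fun i => by simp
  have h0n : ∀ i, ((0 : Fin k → ℕ) i : ℕ∞) ≤ (x.shift n hn).deg i := fun i => by simp
  have emm : x.seg m m le_rfl hm = x.seg n n le_rfl hn := by
    have e0 : (x.shift m hm).seg 0 0 le_rfl h0m = (x.shift n hn).seg 0 0 le_rfl h0n :=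
      Λ.seg_path_congr hshift le_rfl h0m h0n
    have e1 : (x.shift m hm).seg 0 0 le_rfl h0m = x.seg m m le_rfl hm := by
      show x.seg (m + 0) (m + 0) _ _ = _
      exact Λ.seg_congr' (add_zero m) (add_zero m) _ _ _ _
    have e2 : (x.shift n hn).seg 0 0 le_rfl h0n = x.seg n n le_rfl hn := by
      show x.seg (n + 0) (n + 0) _ _ = _
      exact Λ.seg_congr' (add_zero n) (add_zero n) _ _ _ _
    rw [← e1, ← e2]
    exact e0
  have h2 : Λ.s ν = Λ.r α := by
    rw [hνdef, Λ.s_seg_eq x (show (0 : Fin k → ℕ) ≤ n from zero_le) hn, hαdef, Λ.r_seg_eq x le_sup_left hsup hm]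
    show Λ.r (x.seg n n le_rfl hn) = Λ.r (x.seg m m le_rfl hm)
    exact (congrArg Λ.r emm).symm
  refine ⟨μ, ν, α, h1, h2, ?_, ?_, ?_, ?_, ?_⟩
  · rw [hμdef, Λ.r_seg_eq x (show (0 : Fin k → ℕ) ≤ m from zero_le) hm (fun i => by simp)]
    exact hxr
  · rw [hνdef, Λ.r_seg_eq x (show (0 : Fin k → ℕ) ≤ n from zero_le) hn (fun i => by simp)]
    exact hxr
  · rw [hμdef, x.d_seg]; funext i; simp
  · rw [hνdef, x.d_seg]; funext i; simp
  -- the main clause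
  intro z w₁ w₂ hzb hzr hw1 hw2
  have hdlamμ : Λ.d (Λ.comp μ α h1) = m ⊔ n := by
    rw [Λ.d_comp, hμdef, hαdef, x.d_seg, x.d_seg]
    funext i
    have i1 : m i ≤ (m ⊔ n) i := le_sup_left (a := m) (b := n) i
    simp only [Pi.add_apply, Pi.sub_apply, Pi.zero_apply] at i1 ⊢
    omega
  -- w₁ is a boundary path with range v
  have hw1b : Λ.IsBoundary w₁ := Λ.boundary_extends hFA hzb hw1
  have e00 : ∀ i, ((0 : Fin k → ℕ) i : ℕ∞) ≤ w₁.deg i := fun i => by simp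
  have hw1r : w₁.rng = v := by
    obtain ⟨e, s1, t1⟩ := hw1
    have := congrArg Λ.r s1
    rw [Λ.r_seg_eq w₁ zero_le e e00] at this
    rw [show w₁.rng = w₁.vert 0 e00 from rfl, this, Λ.r_comp, hμdef,
      Λ.r_seg_eq x (show (0 : Fin k → ℕ) ≤ m from zero_le) hm (fun i => by simp)]
    exact hxr
  obtain ⟨hbig1, hm1, hn1, hshift1⟩ := hlp w₁ hw1b hw1r
  -- coordinates where m ≠ n have infinite degree along w₁
  have hinfty : ∀ i, m i ≠ n i → w₁.deg i = ⊤ := by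
    intro i hne
    have hdeq : w₁.deg i - (m i : ℕ∞) = w₁.deg i - (n i : ℕ∞) := by
      have := congrArg (fun y : Λ.InfPath => y.deg i) hshift1
      exact this
    cases hD : w₁.deg i with
    | top => rfl
    | coe dN =>
      exfalso
      rw [hD] at hdeq
      have hmN : m i ≤ dN := by have := hm1 i; rw [hD] at this; exact_mod_cast this
      have hnN : n i ≤ dN := by have := hn1 i; rw [hD] at this; exact_mod_cast this
      rw [← ENat.coe_sub, ← ENat.coe_sub] at hdeq
      have : dN - m i = dN - n i := by exact_mod_cast hdeq
      omega
  set c : Fin k → ℕ := n + ((m ⊔ n) - m) with hcdef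
  have hc_le : ∀ i, (c i : ℕ∞) ≤ w₁.deg i := by
    intro i
    by_cases hne : m i = n i
    · have hci : c i = (m ⊔ n) i := by
        simp only [hcdef, Pi.add_apply, Pi.sub_apply, Pi.sup_apply]
        omega
      rw [hci]
      exact hbig1 i
    · rw [hinfty i hne]
      exact le_top
  have hdlamν : Λ.d (Λ.comp ν α h2) = c := by
    rw [Λ.d_comp, hνdef, hαdef, x.d_seg, x.d_seg]
    funext i
    simp only [hcdef, Pi.add_apply, Pi.sub_apply, Pi.zero_apply]
    omega
  have h_le : ∀ i, ((Λ.d (Λ.comp ν α h2)) i : ℕ∞) ≤ w₁.deg i := by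
    intro i
    rw [congrFun hdlamν i]
    exact hc_le i
  -- w₁(0, m ⊔ n) = μα
  obtain ⟨e, s1, t1⟩ := hw1
  have hseg_mn : w₁.seg 0 (m ⊔ n) zero_le hbig1 = Λ.comp μ α h1 := by
    rw [← s1]
    exact Λ.seg_congr' rfl hdlamμ.symm _ _ _ _
  have hxseg : x.seg 0 (m ⊔ n) zero_le hsup = Λ.comp μ α h1 := exmn.symm
  have hinit : w₁.seg 0 (m ⊔ n) zero_le hbig1 = x.seg 0 (m ⊔ n) zero_le hsup :=
    hseg_mn.trans hxseg.symm
  have hn1' : ∀ i, (n i : ℕ∞) ≤ w₁.deg i := hn1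
  have hw1ν : w₁.seg 0 n zero_le hn1' = ν :=
    Λ.seg_eq_of_initial zero_le le_sup_right hn1' hbig1 hn hsup hinit
  have hw1α : w₁.seg m (m ⊔ n) le_sup_left hbig1 = α :=
    Λ.seg_eq_of_initial le_sup_left le_rfl hbig1 hbig1 hsup hsup hinit
  -- w₁(n, c) = α using the shift identity
  have hbn : ∀ i, ((((m ⊔ n) - m)) i : ℕ∞) ≤ (w₁.shift n hn1).deg i := by
    intro i
    have h6 := enat_sub_le' (b := n i) (hc_le i)
    have hci : c i - n i = ((m ⊔ n) - m) i := by
      simp only [hcdef, Pi.add_apply, Pi.sub_apply, Pi.sup_apply]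
      omega
    rw [hci] at h6
    exact h6
  have hbm : ∀ i, ((((m ⊔ n) - m)) i : ℕ∞) ≤ (w₁.shift m hm1).deg i := by
    intro i
    exact enat_sub_le' (hbig1 i)
  have hw1nc : w₁.seg n c le_self_add hc_le = α := by
    have e1 : (w₁.shift n hn1).seg 0 ((m ⊔ n) - m) zero_le hbn
        = w₁.seg n c le_self_add hc_le := by
      show w₁.seg (n + 0) (n + ((m ⊔ n) - m)) _ _ = _
      exact Λ.seg_congr' (add_zero n) rfl _ _ _ _
    have e2 : (w₁.shift m hm1).seg 0 ((m ⊔ n) - m) zero_le hbm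
        = w₁.seg m (m ⊔ n) le_sup_left hbig1 := by
      show w₁.seg (m + 0) (m + ((m ⊔ n) - m)) _ _ = _
      refine Λ.seg_congr' (add_zero m) ?_ _ _ _ _
      funext i
      have i1 : m i ≤ (m ⊔ n) i := le_sup_left (a := m) (b := n) i
      simp only [Pi.add_apply, Pi.sub_apply]
      omega
    have e3 : (w₁.shift n hn1).seg 0 ((m ⊔ n) - m) zero_le hbn
        = (w₁.shift m hm1).seg 0 ((m ⊔ n) - m) zero_le hbm :=
      (Λ.seg_path_congr hshift1 zero_le hbm hbn).symm
    rw [← e1, e3, e2]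
    exact hw1α
  -- Part A : w₁(0, d(να)) = να
  obtain ⟨hcc, ecc⟩ := w₁.comp_seg 0 n c zero_le le_self_add hn1' hc_le
  have hPartA : w₁.seg 0 (Λ.d (Λ.comp ν α h2)) zero_le h_le = Λ.comp ν α h2 := by
    have eA : w₁.seg 0 c zero_le hc_le = Λ.comp ν α h2 := by
      rw [← ecc]
      exact Λ.comp_congr_s14 hw1ν hw1nc _ _
    exact (Λ.seg_congr' rfl hdlamν zero_le h_le zero_le hc_le).trans eA
  -- Part B : σ^{d(να)}(w₁) = z
  have hmadd : m + ((m ⊔ n) - m) = m ⊔ n := by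
    funext i
    have i1 : m i ≤ (m ⊔ n) i := le_sup_left (a := m) (b := n) i
    simp only [Pi.add_apply, Pi.sub_apply]
    omega
  have hab_m : ∀ i, ((m + ((m ⊔ n) - m)) i : ℕ∞) ≤ w₁.deg i := by
    intro i
    rw [congrFun hmadd i]
    exact hbig1 i
  have hPartB : w₁.shift (Λ.d (Λ.comp ν α h2)) h_le = z := by
    rw [Λ.shift_congr w₁ hdlamν h_le hc_le]
    calc w₁.shift c hc_le
        = (w₁.shift n hn1).shift ((m ⊔ n) - m) hbn :=
          (Λ.shift_shift w₁ n ((m ⊔ n) - m) hn1 hbn hc_le).symm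
      _ = (w₁.shift m hm1).shift ((m ⊔ n) - m) hbm :=
          Λ.shift_path_congr hshift1.symm hbn hbm
      _ = w₁.shift (m + ((m ⊔ n) - m)) hab_m :=
          Λ.shift_shift w₁ m ((m ⊔ n) - m) hm1 hbm hab_m
      _ = w₁.shift (m ⊔ n) hbig1 := Λ.shift_congr w₁ hmadd hab_m hbig1
      _ = w₁.shift (Λ.d (Λ.comp μ α h1)) e := (Λ.shift_congr w₁ hdlamμ e hbig1).symm
      _ = z := t1
  exact Λ.extends_unique ⟨h_le, hPartA, hPartB⟩ hw2

end KGraph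
end
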